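/- Let K be an ℓ×ℓ real symmetric matrix with nonnegative entries, zero diagonal, and row sums Σ_j K_ij ≤ c for all i. Fix 2 < k < ℓ. If every principal k×k submatrix of K is Einstein (has all its row sums equal), then all off-diagonal entries of K are equal; i.e., K = κ'(J−I) for some κ' ≥ 0, where J is the all-ones matrix and I the identity. -/

import Mathlib

open Matrix
open scoped BigOperators

theorem stmt_8 {ℓ k : ℕ} (hk : 2 < k) (hkl : k < ℓ)
    (K : Matrix (Fin ℓ) (Fin ℓ) ℝ) (c : ℝ)
    (hsym : K.IsSymm) (hdiag : ∀ i, K i i = 0)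
    (hnonneg : ∀ i j, 0 ≤ K i j)
    (hrow : ∀ i, ∑ j, K i j ≤ c)
    (hEin : ∀ f : Fin k → Fin ℓ, Function.Injective f →
      ∀ a b : Fin k, ∑ t, K (f a) (f t) = ∑ t, K (f b) (f t)) :
    ∃ κ' : ℝ, 0 ≤ κ' ∧ ∀ i j, i ≠ j → K i j = κ' := by
  have hsym' : ∀ i j, K i j = K j i := by
    intro i j
    have := congrFun (congrFun hsym j) i
    simpa [Matrix.transpose_apply] using this
  -- Step 1: finset version of the hypothesis
  have hS : ∀ S : Finset (Fin ℓ), S.card = k → ∀ a ∈ S, ∀ b ∈ S,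
      ∑ t ∈ S, K a t = ∑ t ∈ S, K b t := by
    intro S hcard a ha b hb
    have e : Fin k ≃ {x // x ∈ S} := (S.equivFinOfCardEq hcard).symm
    have hf : Function.Injective (fun t : Fin k => ((e t : {x // x ∈ S}) : Fin ℓ)) :=
      fun x y h => e.injective (Subtype.ext h)
    have h1 := hEin _ hf (e.symm ⟨a, ha⟩) (e.symm ⟨b, hb⟩)
    simp only [Equiv.apply_symm_apply] at h1
    have ha' : ∀ x : Fin ℓ, ∑ t : Fin k, K x ((e t : {y // y ∈ S}) : Fin ℓ)
        = ∑ t ∈ S, K x t := by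
      intro x
      rw [← Finset.sum_coe_sort S (fun t => K x t)]
      exact Equiv.sum_comp e (fun s : {y // y ∈ S} => K x (s : Fin ℓ))
    rw [ha' a, ha' b] at h1
    exact h1
  -- Step 2: sums over (k-2)-subsets avoiding i,j vanish
  have hT : ∀ i j : Fin ℓ, i ≠ j → ∀ T : Finset (Fin ℓ), T.card = k - 2 →
      i ∉ T → j ∉ T → ∑ t ∈ T, (K i t - K j t) = 0 := by
    intro i j hij T hTcard hiT hjT
    have hjT' : j ∉ T := hjT
    have hiT' : i ∉ insert j T := by simp [hij, hiT]
    set S := insert i (insert j T) with hSdef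
    have hScard : S.card = k := by
      rw [hSdef, Finset.card_insert_of_notMem hiT', Finset.card_insert_of_notMem hjT',
        hTcard]
      omega
    have hiS : i ∈ S := by simp [hSdef]
    have hjS : j ∈ S := by simp [hSdef]
    have h := hS S hScard i hiS j hjS
    rw [hSdef] at h
    rw [Finset.sum_insert hiT', Finset.sum_insert hiT',
      Finset.sum_insert hjT', Finset.sum_insert hjT'] at h
    rw [hdiag i, hdiag j, hsym' j i] at h
    have : ∑ t ∈ T, K i t = ∑ t ∈ T, K j t := by linarith
    rw [Finset.sum_sub_distrib, this, sub_self]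
  -- Step 3: K i t = K j t for t outside {i,j}
  have hone : ∀ i j t : Fin ℓ, i ≠ j → t ≠ i → t ≠ j → K i t = K j t := by
    intro i j t hij hti htj
    -- the difference function is constant off {i,j}
    have hconst : ∀ s s' : Fin ℓ, s ≠ i → s ≠ j → s' ≠ i → s' ≠ j → s ≠ s' →
        K i s - K j s = K i s' - K j s' := by
      intro s s' hsi hsj hs'i hs'j hss'
      have hcard : k - 3 ≤ (Finset.univ \ {i, j, s, s'} : Finset (Fin ℓ)).card := by
        have : ({i, j, s, s'} : Finset (Fin ℓ)).card ≤ 4 :=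
          Finset.card_le_four
        have h2 := Finset.card_sdiff_add_card_eq_card
          (Finset.subset_univ ({i, j, s, s'} : Finset (Fin ℓ)))
        simp only [Finset.card_univ, Fintype.card_fin] at h2
        omega
      obtain ⟨T0, hT0sub, hT0card⟩ := Finset.exists_subset_card_eq hcard
      have hmem : ∀ x ∈ T0, x ≠ i ∧ x ≠ j ∧ x ≠ s ∧ x ≠ s' := by
        intro x hx
        have := hT0sub hx
        simp only [Finset.mem_sdiff, Finset.mem_insert, Finset.mem_singleton] at this
        tauto
      have hsT0 : s ∉ T0 := fun h => ((hmem s h).2.2.1) rfl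
      have hs'T0 : s' ∉ T0 := fun h => ((hmem s' h).2.2.2) rfl
      have hiT0 : ∀ x, x ∈ insert s T0 → x ≠ i := by
        intro x hx; rcases Finset.mem_insert.mp hx with h | h
        · exact h ▸ hsi
        · exact (hmem x h).1
      have h1 : ∑ t ∈ insert s T0, (K i t - K j t) = 0 := by
        apply hT i j hij _ (by rw [Finset.card_insert_of_notMem hsT0, hT0card]; omega)
        · intro h; exact (hiT0 i h) rfl
        · intro h
          rcases Finset.mem_insert.mp h with h | h
          · exact hsj h.symm
          · exact (hmem j h).2.1 rfl
      have h2 : ∑ t ∈ insert s' T0, (K i t - K j t) = 0 := by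
        apply hT i j hij _ (by rw [Finset.card_insert_of_notMem hs'T0, hT0card]; omega)
        · intro h
          rcases Finset.mem_insert.mp h with h | h
          · exact hs'i h.symm
          · exact (hmem i h).1 rfl
        · intro h
          rcases Finset.mem_insert.mp h with h | h
          · exact hs'j h.symm
          · exact (hmem j h).2.1 rfl
      rw [Finset.sum_insert hsT0] at h1
      rw [Finset.sum_insert hs'T0] at h2
      linarith
    -- pick a (k-2)-subset avoiding i, j, t
    have hcard : k - 2 ≤ (Finset.univ \ {i, j, t} : Finset (Fin ℓ)).card := by
      have : ({i, j, t} : Finset (Fin ℓ)).card ≤ 3 :=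
        Finset.card_le_three
      have h2 := Finset.card_sdiff_add_card_eq_card
        (Finset.subset_univ ({i, j, t} : Finset (Fin ℓ)))
      simp only [Finset.card_univ, Fintype.card_fin] at h2
      omega
    obtain ⟨T, hTsub, hTcard⟩ := Finset.exists_subset_card_eq hcard
    have hmem : ∀ x ∈ T, x ≠ i ∧ x ≠ j ∧ x ≠ t := by
      intro x hx
      have := hTsub hx
      simp only [Finset.mem_sdiff, Finset.mem_insert, Finset.mem_singleton] at this
      tauto
    have hsum : ∑ x ∈ T, (K i x - K j x) = 0 :=
      hT i j hij T hTcard (fun h => (hmem i h).1 rfl) (fun h => (hmem j h).2.1 rfl)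
    have hrepl : ∑ x ∈ T, (K i x - K j x) = T.card • (K i t - K j t) := by
      rw [← Finset.sum_const]
      apply Finset.sum_congr rfl
      intro x hx
      exact hconst x t (hmem x hx).1 (hmem x hx).2.1 hti htj (hmem x hx).2.2
    rw [hrepl, hTcard] at hsum
    have hk2 : ((k - 2 : ℕ) : ℝ) ≠ 0 := by
      simp only [ne_eq, Nat.cast_eq_zero]; omega
    have : (K i t - K j t) = 0 := by
      rw [nsmul_eq_mul] at hsum
      exact (mul_eq_zero.mp hsum).resolve_left hk2
    linarith
  -- Step 4: all off-diagonal entries are equal pairwise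
  have htwo : ∀ i j p q : Fin ℓ, i ≠ j → p ≠ q → K i j = K p q := by
    intro i j p q hij hpq
    by_cases hiq : i = q
    · subst hiq
      by_cases hjp : j = p
      · subst hjp; exact hsym' i j
      · -- K i j = K i p = K p i = K p q with q = i
        have h1 : K j i = K p i := hone j p i hjp hij (Ne.symm hpq)
        rw [hsym' i j, h1]
    · by_cases hjq : j = q
      · subst hjq
        by_cases hip : i = p
        · subst hip; rfl
        · exact hone i p j hip (Ne.symm hij) (Ne.symm hpq)
      · -- first move column: K i j = K i q
        have h1 : K j i = K q i := hone j q i hjq hij hiq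
        have h2 : K i j = K i q := by rw [hsym' i j, h1, hsym' q i]
        by_cases hip : i = p
        · subst hip; exact h2
        · have h3 : K i q = K p q := hone i p q hip (fun h => hiq h.symm) (Ne.symm hpq)
          rw [h2, h3]
  -- conclude
  have hℓ2 : 2 ≤ ℓ := by omega
  refine ⟨K ⟨0, by omega⟩ ⟨1, by omega⟩, hnonneg _ _, ?_⟩
  intro i j hij
  exact htwo i j ⟨0, by omega⟩ ⟨1, by omega⟩ hij (by simp [Fin.ext_iff])
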